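/- Let n ≥ 1 and d ≥ 1 be integers and let X = (X_1, …, X_d) ∈ ℝ^d satisfy ‖X‖² = X_1² + ⋯ + X_d² ≤ n. Then there exists x = (x_1, …, x_n) ∈ K_n^d, with x_i = (ξ_{i,1}, …, ξ_{i,d}), such that: (a) Σ_{i=1}^n ξ_{i,α}/√n = X_α for all 1 ≤ α ≤ d; (b) Σ_{i=1}^n ξ_{i,α}²/n − X_α²/n = 0 for all 1 ≤ α ≤ d − 1; and (c) |(Σ_{i=1}^n ξ_{i,d}²/n − X_d²/n) − (1 − ‖X‖²/n)| ≤ 1/n. -/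

import Mathlib

set_option maxHeartbeats 1000000


open scoped BigOperators

theorem stmt_11 (n d : ℕ) (hn : 1 ≤ n) (hd : 1 ≤ d)
    (X : Fin d → ℝ) (hX : ∑ α, (X α) ^ 2 ≤ (n : ℝ)) :
    ∃ x : Fin n → Fin d → ℝ,
      -- x ∈ K_n^d
      (∀ i, ∑ α, (x i α) ^ 2 ≤ 1) ∧
      -- (a)
      (∀ α, (∑ i, x i α) / Real.sqrt n = X α) ∧
      -- (b) : for 1 ≤ α ≤ d − 1 (i.e. all indices except the last one)
      (∀ α : Fin d, (α : ℕ) + 1 < d →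
        (∑ i, (x i α) ^ 2) / n - (X α) ^ 2 / n = 0) ∧
      -- (c) : for the last index α = d
      (∀ α : Fin d, (α : ℕ) + 1 = d →
        |((∑ i, (x i α) ^ 2) / n - (X α) ^ 2 / n)
          - (1 - (∑ β, (X β) ^ 2) / n)| ≤ 1 / (n : ℝ)) := by
  obtain ⟨m, rfl⟩ : ∃ m, n = m + 1 := ⟨n - 1, by omega⟩
  obtain ⟨e, rfl⟩ : ∃ e, d = e + 1 := ⟨d - 1, by omega⟩
  have hcast : ((m + 1 : ℕ) : ℝ) = (m : ℝ) + 1 := by push_cast; ring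
  set N : ℝ := (m : ℝ) + 1 with hN_def
  have hNpos : (0 : ℝ) < N := by positivity
  set s : ℝ := Real.sqrt N with hs_def
  have hs2 : s ^ 2 = N := Real.sq_sqrt hNpos.le
  have hspos : 0 < s := Real.sqrt_pos.mpr hNpos
  have hss : s * s = N := by rw [← sq]; exact hs2
  have hS_split : ∑ β, X β ^ 2
      = (∑ α : Fin e, X (Fin.castSucc α) ^ 2) + X (Fin.last e) ^ 2 :=
    Fin.sum_univ_castSucc _
  set T : ℝ := ∑ α : Fin e, X (Fin.castSucc α) ^ 2 with hT_def
  have hT0 : 0 ≤ T := Finset.sum_nonneg fun _ _ => sq_nonneg _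
  set Xd : ℝ := X (Fin.last e) with hXd_def
  have hST : T + Xd ^ 2 ≤ N := by
    rw [hcast, hS_split] at hX; exact hX
  have hR2nonneg : 0 ≤ 1 - T / N := by
    rw [sub_nonneg, div_le_one hNpos]; nlinarith [sq_nonneg Xd]
  set R : ℝ := Real.sqrt (1 - T / N) with hR_def
  have hR0 : 0 ≤ R := Real.sqrt_nonneg _
  have hRsq : R ^ 2 = 1 - T / N := Real.sq_sqrt hR2nonneg
  have hR1 : R ^ 2 ≤ 1 := by
    rw [hRsq]
    have : 0 ≤ T / N := by positivity
    linarith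
  set c : ℝ := Xd / s with hc_def
  have hc2 : c ^ 2 ≤ R ^ 2 := by
    rw [hc_def, div_pow, hs2, hRsq, le_sub_iff_add_le, ← add_div,
      div_le_one hNpos]
    linarith
  have hcR : |c| ≤ R := by
    have := Real.sqrt_le_sqrt hc2
    rwa [Real.sqrt_sq_eq_abs, Real.sqrt_sq hR0] at this
  have hNc : |N * c| ≤ N * R := by
    rw [abs_mul, abs_of_pos hNpos]
    exact mul_le_mul_of_nonneg_left hcR hNpos.le
  set u : ℝ := (N * c / R + N) / 2 with hu_def
  set k : ℕ := min ⌊u⌋₊ m with hk_def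
  have hkm : k ≤ m := min_le_right _ _
  set t : ℝ := N * c - (2 * (k : ℝ) - N + 1) * R with ht_def
  have ht : |t| ≤ R := by
    rcases eq_or_lt_of_le hR0 with hR | hR
    · have hNc0 : N * c = 0 := by
        have h0 : |N * c| ≤ 0 := by rw [← hR] at hNc; simpa using hNc
        simpa using le_antisymm h0 (abs_nonneg _)
      rw [ht_def, hNc0, ← hR]
      simp
    · have hl : -(N * R) ≤ N * c := neg_le_of_abs_le hNc
      have hr : N * c ≤ N * R := le_of_abs_le hNc
      have hu0 : 0 ≤ u := by
        rw [hu_def]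
        have h : -N * R ≤ N * c := by nlinarith
        have : -N ≤ N * c / R := by rw [le_div_iff₀ hR]; exact h
        linarith
      have hun : u ≤ N := by
        rw [hu_def]
        have : N * c / R ≤ N := by rw [div_le_iff₀ hR]; exact hr
        linarith
      have hucR : N * c = (2 * u - N) * R := by
        rw [hu_def]; field_simp; ring
      by_cases hk : ⌊u⌋₊ ≤ m
      · have hk' : k = ⌊u⌋₊ := min_eq_left hk
        have h1 : (k : ℝ) ≤ u := by rw [hk']; exact Nat.floor_le hu0
        have h2 : u < (k : ℝ) + 1 := by rw [hk']; exact Nat.lt_floor_add_one u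
        have htt : t = (2 * (u - (k : ℝ)) - 1) * R := by
          rw [ht_def, hucR]; ring
        rw [htt, abs_mul, abs_of_pos hR]
        have hb : |2 * (u - (k : ℝ)) - 1| ≤ 1 :=
          abs_le.mpr ⟨by linarith, by linarith⟩
        calc |2 * (u - (k : ℝ)) - 1| * R ≤ 1 * R :=
              mul_le_mul_of_nonneg_right hb hR.le
          _ = R := one_mul R
      · have hk' : k = m := min_eq_right (by omega)
        have h1 : ((m : ℝ) + 1) ≤ u := by
          have h : (m + 1 : ℕ) ≤ ⌊u⌋₊ := by omega
          calc ((m : ℝ) + 1) = ((m + 1 : ℕ) : ℝ) := by push_cast; ring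
            _ ≤ (⌊u⌋₊ : ℝ) := by exact_mod_cast h
            _ ≤ u := Nat.floor_le hu0
        have hu : u = N := le_antisymm hun (by rw [hN_def]; exact h1)
        have htR : t = R := by rw [ht_def, hucR, hu, hk', hN_def]; ring
        rw [htR, abs_of_pos hR]
  have htsq : t ^ 2 ≤ R ^ 2 := by
    have := pow_le_pow_left₀ (abs_nonneg t) ht 2
    rwa [sq_abs] at this
  set g : Fin (m + 1) → ℝ :=
    fun i => if (i : ℕ) = m then t else if (i : ℕ) < k then R else -R with hg_def
  have hg_last : g (Fin.last m) = t := by simp [hg_def]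
  have hg_cs : ∀ i : Fin m,
      g (Fin.castSucc i) = if (i : ℕ) < k then R else -R := by
    intro i
    have : (i : ℕ) ≠ m := Nat.ne_of_lt i.isLt
    simp [hg_def, this]
  have hg_inner : ∑ i : Fin m, (if (i : ℕ) < k then R else -R)
      = (k : ℝ) * R + ((m : ℝ) - (k : ℝ)) * (-R) := by
    rw [Fin.sum_univ_eq_sum_range (fun j => if j < k then R else -R) m,
      ← Finset.sum_range_add_sum_Ico _ hkm,
      Finset.sum_congr rfl (fun j hj => if_pos (Finset.mem_range.mp hj)),
      Finset.sum_congr rfl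
        (fun j hj => if_neg (Nat.not_lt.mpr (Finset.mem_Ico.mp hj).1)),
      Finset.sum_const, Finset.sum_const, Finset.card_range, Nat.card_Ico,
      nsmul_eq_mul, nsmul_eq_mul, Nat.cast_sub hkm]
  have hg_sum : ∑ i, g i = N * c := by
    rw [Fin.sum_univ_castSucc, hg_last,
      Finset.sum_congr rfl (fun (i : Fin m) _ => hg_cs i), hg_inner, ht_def,
      hN_def]
    ring
  have hg_sq : ∑ i, g i ^ 2 = t ^ 2 + (m : ℝ) * R ^ 2 := by
    rw [Fin.sum_univ_castSucc, hg_last]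
    have hsq : ∀ i : Fin m, g (Fin.castSucc i) ^ 2 = R ^ 2 := by
      intro i; rw [hg_cs i]; split <;> ring
    rw [Finset.sum_congr rfl (fun (i : Fin m) _ => hsq i), Finset.sum_const,
      Finset.card_univ, Fintype.card_fin, nsmul_eq_mul]
    ring
  have hgiR : ∀ i, g i ^ 2 ≤ R ^ 2 := by
    intro i
    simp only [hg_def]
    split
    · exact htsq
    · split
      · exact le_refl _
      · rw [neg_pow]; simp
  have hdiv : ∀ y : ℝ, N * (y / s) / s = y := by
    intro y
    field_simp
    linear_combination (-y) * hss
  refine ⟨fun i α => if (α : ℕ) = e then g i else X α / s, ?_, ?_, ?_, ?_⟩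
  · -- membership in the ball
    intro i
    rw [Fin.sum_univ_castSucc]
    have hlast : (if ((Fin.last e : Fin (e+1)) : ℕ) = e then g i
        else X (Fin.last e) / s) ^ 2 = g i ^ 2 := by simp
    have hcs : ∀ α : Fin e,
        (if ((Fin.castSucc α : Fin (e+1)) : ℕ) = e then g i
          else X (Fin.castSucc α) / s) ^ 2 = X (Fin.castSucc α) ^ 2 / N := by
      intro α
      have hne : ((Fin.castSucc α : Fin (e+1)) : ℕ) ≠ e := Nat.ne_of_lt α.isLt
      rw [if_neg hne, div_pow, hs2]
    rw [hlast, Finset.sum_congr rfl (fun α _ => hcs α), ← Finset.sum_div]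
    have h1 : g i ^ 2 ≤ 1 - T / N := by rw [← hRsq]; exact hgiR i
    have h2 : (∑ α : Fin e, X (Fin.castSucc α) ^ 2) = T := hT_def.symm
    rw [h2]
    linarith
  · -- (a)
    intro α
    have hsrt : Real.sqrt ((m + 1 : ℕ) : ℝ) = s := by rw [hs_def, hcast]
    rw [hsrt]
    by_cases hα : (α : ℕ) = e
    · have hαl : α = Fin.last e := Fin.ext (by simpa using hα)
      have hsum : ∑ i, (if (α : ℕ) = e then g i else X α / s) = N * c := by
        rw [Finset.sum_congr rfl (fun i _ => if_pos hα)]; exact hg_sum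
      rw [hsum, hαl, ← hXd_def, hc_def]
      exact hdiv Xd
    · have hsum : ∑ i, (if (α : ℕ) = e then g i else X α / s)
          = N * (X α / s) := by
        rw [Finset.sum_congr rfl (fun i _ => if_neg hα), Finset.sum_const,
          Finset.card_univ, Fintype.card_fin, nsmul_eq_mul, hcast]
      rw [hsum]
      exact hdiv (X α)
  · -- (b)
    intro α hα
    have hα' : (α : ℕ) ≠ e := by omega
    have hsum : ∑ i, (if (α : ℕ) = e then g i else X α / s) ^ 2
        = N * (X α ^ 2 / N) := by
      rw [Finset.sum_congr rfl (fun i _ => by rw [if_neg hα']),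
        Finset.sum_const, Finset.card_univ, Fintype.card_fin, nsmul_eq_mul,
        hcast, div_pow, hs2]
    rw [hsum, hcast]
    field_simp
    ring
  · -- (c)
    intro α hα
    have hα' : (α : ℕ) = e := by omega
    have hαl : α = Fin.last e := Fin.ext (by simpa using hα')
    have hsum : ∑ i, (if (α : ℕ) = e then g i else X α / s) ^ 2
        = t ^ 2 + (m : ℝ) * R ^ 2 := by
      rw [Finset.sum_congr rfl (fun i _ => by rw [if_pos hα'])]; exact hg_sq
    rw [hsum, hcast, hαl, ← hXd_def, hS_split]
    have hTN : T = N - N * R ^ 2 := by rw [hRsq]; field_simp; ring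
    have key : (t ^ 2 + (m : ℝ) * R ^ 2) / N - Xd ^ 2 / N
        - (1 - (T + Xd ^ 2) / N) = (t ^ 2 - R ^ 2) / N := by
      rw [hTN, hN_def]; field_simp; ring
    rw [key, abs_div, abs_of_pos hNpos]
    gcongr
    rw [abs_le]
    constructor <;> nlinarith [sq_nonneg t]
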